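/- (Invertibility of the Nambu–Goto Legendre map.) Let T > 0, let G be a symmetric invertible n×n real matrix, let X be an n×2 real matrix, set g := Xᵀ G X with det g < 0, define P := −T·√(−det g)·g⁻¹·Xᵀ·G and Π := P·G⁻¹·Pᵀ. Then Π is invertible and X = −(1/T)·√(−det Π)·G⁻¹·Pᵀ·Π⁻¹; i.e. the multivelocities are recovered from the multimomenta by x^ν_b = −(1/T)√(−det Π) G^{μν} Π_{ab} p^a_μ, where Π_{ab} denotes the inverse matrix of Π^{ab}. -/

import Mathlib

open Matrix

/-- The induced worldsheet metric `g = Xᵀ G X` of the bosonic string, where `G` is the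
spacetime metric and `X` the matrix of multivelocities `x^μ_a`. -/
noncomputable def inducedMetric (n : ℕ) (G : Matrix (Fin n) (Fin n) ℝ)
    (X : Matrix (Fin n) (Fin 2) ℝ) : Matrix (Fin 2) (Fin 2) ℝ :=
  Xᵀ * G * X

/-- The image of the Nambu–Goto Legendre map: the multimomenta
`p^a_μ = −T·√(−det g)·G_{μν} g^{ba} x^ν_b`, i.e. `P = −T·√(−det g)·g⁻¹·Xᵀ·G`. -/
noncomputable def ngMomenta (n : ℕ) (T : ℝ) (G : Matrix (Fin n) (Fin n) ℝ)
    (X : Matrix (Fin n) (Fin 2) ℝ) : Matrix (Fin 2) (Fin n) ℝ :=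
  (-T * Real.sqrt (-(inducedMetric n G X).det)) • ((inducedMetric n G X)⁻¹ * Xᵀ * G)

/-- The matrix `Π^{ab} = G^{μν} p^a_μ p^b_ν`, i.e. `Π = P·G⁻¹·Pᵀ`. -/
noncomputable def ngPi (n : ℕ) (T : ℝ) (G : Matrix (Fin n) (Fin n) ℝ)
    (X : Matrix (Fin n) (Fin 2) ℝ) : Matrix (Fin 2) (Fin 2) ℝ :=
  ngMomenta n T G X * G⁻¹ * (ngMomenta n T G X)ᵀ

/-- **Invertibility of the Nambu–Goto Legendre map.**
For the Nambu–Goto string (tension `T > 0`, symmetric invertible spacetime metric `G`,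
multivelocities `X`, induced metric `g = Xᵀ G X` with `det g < 0`, multimomenta
`P = −T·√(−det g)·g⁻¹·Xᵀ·G`, `Π = P·G⁻¹·Pᵀ`), the matrix `Π` is invertible and the
multivelocities are recovered from the multimomenta:
`X = −(1/T)·√(−det Π)·G⁻¹·Pᵀ·Π⁻¹`, i.e. `x^ν_b = −(1/T)√(−det Π) G^{μν} Π_{ab} p^a_μ`. -/
theorem ng_legendre_invertible
    (n : ℕ) (T : ℝ) (hT : 0 < T)
    (G : Matrix (Fin n) (Fin n) ℝ) (hGsymm : G.IsSymm) (hG : IsUnit G.det)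
    (X : Matrix (Fin n) (Fin 2) ℝ)
    (hg : (inducedMetric n G X).det < 0) :
    IsUnit (ngPi n T G X).det ∧
    X = (-(1 / T) * Real.sqrt (-(ngPi n T G X).det)) •
          (G⁻¹ * (ngMomenta n T G X)ᵀ * (ngPi n T G X)⁻¹) := by
  set g := inducedMetric n G X with hgdef
  have hGT : Gᵀ = G := hGsymm
  have hd : g.det ≠ 0 := ne_of_lt hg
  have hgu : IsUnit g.det := isUnit_iff_ne_zero.mpr hd
  have hdpos : 0 < -g.det := by linarith
  have hgT : gᵀ = g := by
    rw [hgdef]; unfold inducedMetric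
    rw [Matrix.transpose_mul, Matrix.transpose_mul, Matrix.transpose_transpose, hGT,
      Matrix.mul_assoc]
  set c := -T * Real.sqrt (-g.det) with hc
  have hss : Real.sqrt (-g.det) * Real.sqrt (-g.det) = -g.det :=
    Real.mul_self_sqrt hdpos.le
  have hc2 : c * c = T ^ 2 * (-g.det) := by
    calc c * c = T ^ 2 * (Real.sqrt (-g.det) * Real.sqrt (-g.det)) := by rw [hc]; ring
    _ = T ^ 2 * (-g.det) := by rw [hss]
  have hPT : (g⁻¹ * Xᵀ * G)ᵀ = G * X * g⁻¹ := by
    rw [Matrix.transpose_mul, Matrix.transpose_mul, Matrix.transpose_transpose, hGT,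
      Matrix.transpose_nonsing_inv, hgT, Matrix.mul_assoc]
  have hMomT : (ngMomenta n T G X)ᵀ = c • (G * X * g⁻¹) := by
    unfold ngMomenta; rw [← hgdef, Matrix.transpose_smul, hPT, hc]
  have hcore : g⁻¹ * Xᵀ * G * G⁻¹ * (G * X * g⁻¹) = g⁻¹ := by
    simp only [Matrix.mul_assoc]
    rw [Matrix.nonsing_inv_mul_cancel_left G _ hG]
    have hXgX : Xᵀ * (G * (X * g⁻¹)) = g * g⁻¹ := by
      rw [hgdef]; unfold inducedMetric; simp only [Matrix.mul_assoc]
    rw [hXgX, Matrix.nonsing_inv_mul_cancel_left g _ hgu]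
  have hPi : ngPi n T G X = (T ^ 2 * (-g.det)) • g⁻¹ := by
    unfold ngPi
    rw [hMomT]
    unfold ngMomenta
    rw [← hgdef, Matrix.smul_mul, Matrix.smul_mul, Matrix.mul_smul, smul_smul, hc2, hcore]
  have ha : (T ^ 2 * (-g.det)) ≠ 0 := by positivity
  have hPiInv : (ngPi n T G X)⁻¹ = (T ^ 2 * (-g.det))⁻¹ • g := by
    apply Matrix.inv_eq_right_inv
    rw [hPi, Matrix.smul_mul, Matrix.mul_smul, smul_smul, Matrix.nonsing_inv_mul g hgu,
      mul_inv_cancel₀ ha, one_smul]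
  have hdetPi : (ngPi n T G X).det = T ^ 4 * g.det := by
    rw [hPi, Matrix.det_smul, Matrix.det_nonsing_inv, Ring.inverse_eq_inv']
    simp only [Fintype.card_fin]
    field_simp
  have hPiu : IsUnit (ngPi n T G X).det := by
    rw [hdetPi]
    exact isUnit_iff_ne_zero.mpr (mul_ne_zero (by positivity) hd)
  have hsqrtPi : Real.sqrt (-(ngPi n T G X).det) = T ^ 2 * Real.sqrt (-g.det) := by
    rw [hdetPi, show -(T ^ 4 * g.det) = (T ^ 2) ^ 2 * (-g.det) by ring,
      Real.sqrt_mul (by positivity), Real.sqrt_sq (by positivity)]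
  refine ⟨hPiu, ?_⟩
  rw [hsqrtPi, hMomT, hPiInv]
  have hmat0 : G⁻¹ * (G * X * g⁻¹) * g = X := by
    simp only [Matrix.mul_assoc]
    rw [Matrix.nonsing_inv_mul g hgu, Matrix.mul_one,
      Matrix.nonsing_inv_mul_cancel_left G X hG]
  simp only [Matrix.mul_smul, Matrix.smul_mul, smul_smul, hmat0]
  have hscal : -(1 / T) * (T ^ 2 * Real.sqrt (-g.det)) * ((T ^ 2 * -g.det)⁻¹ * c) = 1 := by
    calc -(1 / T) * (T ^ 2 * Real.sqrt (-g.det)) * ((T ^ 2 * -g.det)⁻¹ * c)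
        = (T ^ 2 * (Real.sqrt (-g.det) * Real.sqrt (-g.det))) * (T ^ 2 * -g.det)⁻¹ := by
          rw [hc]; field_simp
      _ = 1 := by rw [hss]; exact mul_inv_cancel₀ ha
  rw [hscal, one_smul]
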